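/- For n ≥ 5, the flip graph D_n on ordered pairs of disjoint triangulations of a convex n-gon is connected, and its diameter is at most diam(T_n) + (2n − 8), where T_n is the flip graph of all triangulations of the n-gon; in particular, if diam(T_n) ≤ 2n−8, then diam(D_n) ≤ 4n−16. -/

import Mathlib

/-- A diagonal of the convex `n`-gon: an unordered pair of distinct,
non-adjacent vertices (vertices labeled by `Fin n` in cyclic order). -/
def IsDiag (n : ℕ) (d : Sym2 (Fin n)) : Prop :=
  ∃ a b : Fin n, d = s(a, b) ∧ a ≠ b ∧
    (a.val + 1) % n ≠ b.val ∧ (b.val + 1) % n ≠ a.val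

/-- Two diagonals of the convex `n`-gon cross (their endpoints strictly
interleave around the polygon). -/
def Crosses (n : ℕ) (d e : Sym2 (Fin n)) : Prop :=
  (∃ a b c c' : Fin n, d = s(a, b) ∧ e = s(c, c') ∧ a < c ∧ c < b ∧ b < c') ∨
  (∃ a b c c' : Fin n, e = s(a, b) ∧ d = s(c, c') ∧ a < c ∧ c < b ∧ b < c')

/-- A triangulation of the convex `n`-gon: a maximal set of pairwise
noncrossing diagonals. -/
structure Triangulation (n : ℕ) where
  diags : Finset (Sym2 (Fin n))
  isDiag : ∀ d ∈ diags, IsDiag n d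
  noncross : ∀ d ∈ diags, ∀ e ∈ diags, ¬ Crosses n d e
  maximal : ∀ d, IsDiag n d → (∀ e ∈ diags, ¬ Crosses n d e) → d ∈ diags

/-- `IsFlip T d T'` : the triangulation `T'` is obtained from `T` by flipping
the diagonal `d` (removing `d`, keeping all other diagonals, and inserting the
opposite diagonal of the resulting quadrilateral). -/
def IsFlip {n : ℕ} (T : Triangulation n) (d : Sym2 (Fin n)) (T' : Triangulation n) : Prop :=
  d ∈ T.diags ∧ d ∉ T'.diags ∧ ∀ e ∈ T.diags, e ≠ d → e ∈ T'.diags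

/-- Two triangulations are related by a single diagonal flip. -/
def FlipAdj {n : ℕ} (T T' : Triangulation n) : Prop := ∃ d, IsFlip T d T'

/-- `d'` is the new diagonal created when passing from `T` to `T'`. -/
def NewDiag {n : ℕ} (T T' : Triangulation n) (d' : Sym2 (Fin n)) : Prop :=
  d' ∈ T'.diags ∧ d' ∉ T.diags

/-- Flip of a pair of triangulations at a diagonal of the first coordinate:
flip it there, and if the new diagonal lies in the second triangulation,
flip it there as well. -/
def PairFlipFst {n : ℕ} (p q : Triangulation n × Triangulation n) : Prop :=
  ∃ d T₁' d', IsFlip p.1 d T₁' ∧ NewDiag p.1 T₁' d' ∧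
    ((d' ∉ p.2.diags ∧ q = (T₁', p.2)) ∨
     (d' ∈ p.2.diags ∧ ∃ T₂', IsFlip p.2 d' T₂' ∧ q = (T₁', T₂')))

/-- Flip of a pair of triangulations at a diagonal of the second coordinate. -/
def PairFlipSnd {n : ℕ} (p q : Triangulation n × Triangulation n) : Prop :=
  ∃ d T₂' d', IsFlip p.2 d T₂' ∧ NewDiag p.2 T₂' d' ∧
    ((d' ∉ p.1.diags ∧ q = (p.1, T₂')) ∨
     (d' ∈ p.1.diags ∧ ∃ T₁', IsFlip p.1 d' T₁' ∧ q = (T₁', T₂')))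

/-- The flip operation on ordered pairs of triangulations. -/
def PairFlip {n : ℕ} (p q : Triangulation n × Triangulation n) : Prop :=
  PairFlipFst p q ∨ PairFlipSnd p q

/-- Vertices of the flip graph `D_n`: ordered pairs of triangulations of the
convex `n`-gon sharing no diagonal. -/
def DVert (n : ℕ) := {p : Triangulation n × Triangulation n // Disjoint p.1.diags p.2.diags}

/-- The flip graph `D_n` on ordered pairs of disjoint triangulations. -/
def DGraph (n : ℕ) : SimpleGraph (DVert n) where
  Adj p q := p ≠ q ∧ (PairFlip p.1 q.1 ∨ PairFlip q.1 p.1)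
  symm := ⟨fun _ _ h => ⟨h.1.symm, h.2.symm⟩⟩
  loopless := ⟨fun _ h => h.1 rfl⟩

/-- The flip graph `T_n` on all triangulations of the convex `n`-gon. -/
def TriGraph (n : ℕ) : SimpleGraph (Triangulation n) where
  Adj T T' := T ≠ T' ∧ (FlipAdj T T' ∨ FlipAdj T' T)
  symm := ⟨fun _ _ h => ⟨h.1.symm, h.2.symm⟩⟩
  loopless := ⟨fun _ h => h.1 rfl⟩

/-- Vertices of `T_n(S)`: triangulations disjoint from `S`. -/
def TnSVert (n : ℕ) (S : Triangulation n) := {T : Triangulation n // Disjoint T.diags S.diags}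

/-- The flip graph `T_n(S)` induced on triangulations disjoint from `S`. -/
def TnS (n : ℕ) (S : Triangulation n) : SimpleGraph (TnSVert n S) where
  Adj T T' := T ≠ T' ∧ (FlipAdj T.1 T'.1 ∨ FlipAdj T'.1 T.1)
  symm := ⟨fun _ _ h => ⟨h.1.symm, h.2.symm⟩⟩
  loopless := ⟨fun _ h => h.1 rfl⟩

namespace Pf

variable {n : ℕ}

def XP (A B C D : ℕ) : Prop :=
  (min A B < min C D ∧ min C D < max A B ∧ max A B < max C D) ∨
  (min C D < min A B ∧ min A B < max C D ∧ max C D < max A B)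

lemma crosses_of {a b c d : Fin n} (h1 : a.1 < c.1) (h2 : c.1 < b.1) (h3 : b.1 < d.1) :
    Crosses n s(a,b) s(c,d) :=
  Or.inl ⟨a, b, c, d, rfl, rfl, h1, h2, h3⟩

lemma crosses_of' {a b c d : Fin n} (h1 : c.1 < a.1) (h2 : a.1 < d.1) (h3 : d.1 < b.1) :
    Crosses n s(a,b) s(c,d) :=
  Or.inr ⟨c, d, a, b, rfl, rfl, h1, h2, h3⟩

lemma crosses_iff {a b c d : Fin n} :
    Crosses n s(a,b) s(c,d) ↔ XP a.1 b.1 c.1 d.1 := by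
  constructor
  · rintro (⟨p, q, r, t, hd, he, h1, h2, h3⟩ | ⟨p, q, r, t, he, hd, h1, h2, h3⟩) <;>
    · rw [Sym2.eq_iff] at hd he
      rw [Fin.lt_def] at h1 h2 h3
      unfold XP
      rcases hd with ⟨rfl, rfl⟩ | ⟨rfl, rfl⟩ <;> rcases he with ⟨rfl, rfl⟩ | ⟨rfl, rfl⟩ <;> omega
  · intro h
    unfold XP at h
    rcases le_total a.1 b.1 with hab | hab <;> rcases le_total c.1 d.1 with hcd | hcd <;>
      [skip; rw [show s(c,d) = s(d,c) from Sym2.eq_swap];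
       rw [show s(a,b) = s(b,a) from Sym2.eq_swap];
       (rw [show s(a,b) = s(b,a) from Sym2.eq_swap, show s(c,d) = s(d,c) from Sym2.eq_swap])] <;>
    · rcases h with ⟨h1, h2, h3⟩ | ⟨h1, h2, h3⟩
      · exact crosses_of (by omega) (by omega) (by omega)
      · exact crosses_of' (by omega) (by omega) (by omega)

lemma crosses_symm {d e : Sym2 (Fin n)} (h : Crosses n d e) : Crosses n e d := by
  rcases h with ⟨p, q, r, t, hd, he, h⟩ | ⟨p, q, r, t, he, hd, h⟩
  · exact Or.inr ⟨p, q, r, t, hd, he, h⟩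
  · exact Or.inl ⟨p, q, r, t, he, hd, h⟩

lemma isDiag_iff {a b : Fin n} :
    IsDiag n s(a,b) ↔ a.1 ≠ b.1 ∧ (a.1 + 1) % n ≠ b.1 ∧ (b.1 + 1) % n ≠ a.1 := by
  constructor
  · rintro ⟨p, q, h, h1, h2, h3⟩
    rw [Sym2.eq_iff] at h
    rw [Fin.ne_iff_vne] at h1
    rcases h with ⟨rfl, rfl⟩ | ⟨rfl, rfl⟩ <;> exact ⟨by omega, by tauto, by tauto⟩
  · rintro ⟨h1, h2, h3⟩
    exact ⟨a, b, rfl, Fin.ne_of_val_ne h1, h2, h3⟩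

/-! rotation -/

def rF (x : Fin n) : Fin n := ⟨(x.1 + 1) % n, Nat.mod_lt _ x.pos⟩

lemma rF_iter (k : ℕ) (x : Fin n) : (rF^[k] x).1 = (x.1 + k) % n := by
  induction k with
  | zero => simp [Nat.mod_eq_of_lt x.isLt]
  | succ k ih =>
    rw [Function.iterate_succ_apply']
    show ((rF^[k] x).1 + 1) % n = _
    rw [ih, Nat.mod_add_mod, Nat.add_assoc]

lemma rF_iter_n (x : Fin n) : rF^[n] x = x := by
  apply Fin.ext
  rw [rF_iter, Nat.add_mod_right, Nat.mod_eq_of_lt x.isLt]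

lemma succ_mod {A : ℕ} (hA : A < n) : (A+1)%n = if A = n-1 then 0 else A+1 := by
  split
  · have : A + 1 = n := by omega
    rw [this]; exact Nat.mod_self n
  · exact Nat.mod_eq_of_lt (by omega)

lemma xp_rot {A B C D : ℕ} (hA : A < n) (hB : B < n) (hC : C < n) (hD : D < n)
    (h : XP A B C D) : XP ((A+1)%n) ((B+1)%n) ((C+1)%n) ((D+1)%n) := by
  rw [succ_mod hA, succ_mod hB, succ_mod hC, succ_mod hD]
  unfold XP at *
  split_ifs <;> omega

def rS : Sym2 (Fin n) → Sym2 (Fin n) := Sym2.map rF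

lemma rS_iter (k : ℕ) : (rS (n := n))^[k] = Sym2.map (rF^[k]) := by
  induction k with
  | zero => simp [Sym2.map_id]
  | succ k ih =>
    funext d
    rw [Function.iterate_succ_apply', ih]
    show Sym2.map rF _ = _
    rw [Sym2.map_map, Function.iterate_succ']

lemma rS_iter_n (d : Sym2 (Fin n)) : (rS (n := n))^[n] d = d := by
  rw [rS_iter]
  have : rF^[n] = (id : Fin n → Fin n) := funext rF_iter_n
  rw [this, Sym2.map_id, id_eq]

lemma crosses_rot {d e : Sym2 (Fin n)} (h : Crosses n d e) :
    Crosses n (rS d) (rS e) := by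
  induction d, e using Sym2.inductionOn₂ with
  | hf a b c c' =>
    rw [crosses_iff] at h
    unfold rS
    rw [Sym2.map_pair_eq, Sym2.map_pair_eq, crosses_iff]
    exact xp_rot a.isLt b.isLt c.isLt c'.isLt h

lemma mod2 (hn : 5 ≤ n) {A : ℕ} (hA : A < n) :
    (A+2)%n = if A = n-1 then 1 else if A = n-2 then 0 else A+2 := by
  split
  · have : A + 2 = 1 + n := by omega
    rw [this, Nat.add_mod_right]
    exact Nat.mod_eq_of_lt (by omega)
  · split
    · have : A + 2 = n := by omega
      rw [this]; exact Nat.mod_self n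
    · exact Nat.mod_eq_of_lt (by omega)

lemma dp_rot (hn : 5 ≤ n) {A B : ℕ} (hA : A < n) (hB : B < n)
    (h1 : A ≠ B) (h2 : (A+1)%n ≠ B) (h3 : (B+1)%n ≠ A) :
    (A+1)%n ≠ (B+1)%n ∧ ((A+1)%n + 1)%n ≠ (B+1)%n ∧ ((B+1)%n + 1)%n ≠ (A+1)%n := by
  rw [Nat.mod_add_mod, Nat.mod_add_mod]
  rw [succ_mod hA, succ_mod hB] at *
  rw [show A+1+1 = A+2 from rfl, show B+1+1 = B+2 from rfl, mod2 hn hA, mod2 hn hB]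
  split_ifs at * <;> omega

lemma isDiag_rot (hn : 5 ≤ n) {d : Sym2 (Fin n)} (h : IsDiag n d) : IsDiag n (rS d) := by
  induction d using Sym2.ind with
  | _ a b =>
    rw [isDiag_iff] at h
    unfold rS
    rw [Sym2.map_pair_eq, isDiag_iff]
    exact dp_rot hn a.isLt b.isLt h.1 h.2.1 h.2.2

lemma crosses_rotk (k : ℕ) {d e : Sym2 (Fin n)} (h : Crosses n d e) :
    Crosses n ((rS (n := n))^[k] d) ((rS (n := n))^[k] e) := by
  induction k with
  | zero => exact h
  | succ k ih =>
    rw [Function.iterate_succ_apply', Function.iterate_succ_apply']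
    exact crosses_rot ih

lemma iterate_pred (hn : 0 < n) (d : Sym2 (Fin n)) :
    (rS (n := n))^[n-1] (rS d) = d := by
  rw [← Function.iterate_succ_apply, show (n-1).succ = n by omega, rS_iter_n]

lemma crosses_rot_iff (hn : 0 < n) {d e : Sym2 (Fin n)} :
    Crosses n (rS d) (rS e) ↔ Crosses n d e := by
  refine ⟨fun h => ?_, crosses_rot⟩
  have := crosses_rotk (n-1) h
  rwa [iterate_pred hn, iterate_pred hn] at this

lemma rS_inj (hn : 0 < n) : Function.Injective (rS (n := n)) := by
  intro d e h
  have := congrArg ((rS (n := n))^[n-1]) h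
  rwa [iterate_pred hn, iterate_pred hn] at this

lemma isDiag_rot_iff (hn : 5 ≤ n) {d : Sym2 (Fin n)} :
    IsDiag n (rS d) ↔ IsDiag n d := by
  refine ⟨fun h => ?_, isDiag_rot hn⟩
  have h2 : ∀ k, IsDiag n ((rS (n := n))^[k] (rS d)) := by
    intro k
    induction k with
    | zero => exact h
    | succ k ih => rw [Function.iterate_succ_apply']; exact isDiag_rot hn ih
  have := h2 (n-1)
  rwa [iterate_pred (by omega)] at this

lemma tri_ext {T T' : Triangulation n} (h : T.diags = T'.diags) : T = T' := by
  cases T; cases T'; simpa using h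

def rot1 (hn : 5 ≤ n) (T : Triangulation n) : Triangulation n where
  diags := T.diags.image rS
  isDiag := by
    intro d hd
    obtain ⟨e, he, rfl⟩ := Finset.mem_image.1 hd
    exact isDiag_rot hn (T.isDiag e he)
  noncross := by
    intro d hd e he hc
    obtain ⟨d', hd', rfl⟩ := Finset.mem_image.1 hd
    obtain ⟨e', he', rfl⟩ := Finset.mem_image.1 he
    exact T.noncross d' hd' e' he' ((crosses_rot_iff (by omega)).1 hc)
  maximal := by
    intro g hg hnc
    have hgeq : rS ((rS (n := n))^[n-1] g) = g := by
      have h0 := Function.iterate_succ_apply' (rS (n := n)) (n-1) g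
      rw [show (n-1).succ = n by omega, rS_iter_n] at h0
      exact h0.symm
    set g' := (rS (n := n))^[n-1] g with hg'
    have hg'd : IsDiag n g' := by
      rw [← isDiag_rot_iff hn, hgeq]; exact hg
    have : g' ∈ T.diags := by
      apply T.maximal g' hg'd
      intro e he hc
      refine hnc (rS e) (Finset.mem_image_of_mem _ he) ?_
      rw [← hgeq]
      exact crosses_rot hc
    rw [← hgeq]
    exact Finset.mem_image_of_mem _ this

lemma mem_rot1 (hn : 5 ≤ n) {T : Triangulation n} {d : Sym2 (Fin n)} :
    rS d ∈ (rot1 hn T).diags ↔ d ∈ T.diags := by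
  constructor
  · intro h
    obtain ⟨e, he, heq⟩ := Finset.mem_image.1 h
    rwa [← rS_inj (by omega) heq]
  · exact fun h => Finset.mem_image_of_mem _ h

lemma rot1_iter_diags (hn : 5 ≤ n) (k : ℕ) (T : Triangulation n) :
    ((rot1 hn)^[k] T).diags = T.diags.image ((rS (n := n))^[k]) := by
  induction k with
  | zero => simp
  | succ k ih =>
    rw [Function.iterate_succ_apply']
    show ((rot1 hn ((rot1 hn)^[k] T))).diags = _
    rw [show (rot1 hn ((rot1 hn)^[k] T)).diags = ((rot1 hn)^[k] T).diags.image rS from rfl, ih,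
      Finset.image_image, Function.iterate_succ']

lemma rot1_iter_n (hn : 5 ≤ n) (T : Triangulation n) : (rot1 hn)^[n] T = T := by
  apply tri_ext
  rw [rot1_iter_diags]
  have : (rS (n := n))^[n] = id := funext rS_iter_n
  rw [this, Finset.image_id]

lemma xp_swap_right {A B U V : ℕ} (h : XP A B U V) : XP A B V U := by
  unfold XP at *; omega

lemma xp_irrefl {A B U : ℕ} (h : XP A B U U) : False := by
  unfold XP at h; omega

lemma xp_self {A B : ℕ} (h : XP A B A B) : False := by
  unfold XP at h; omega

/-- master elimination: to show a candidate `s(x,y)` crosses nothing in `T.diags`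
except possibly `g`, it suffices to handle sorted members. -/
lemma noncross_all {T : Triangulation n} (x y : Fin n) (g : Sym2 (Fin n))
    (key : ∀ u v : Fin n, u.1 < v.1 → s(u,v) ∈ T.diags → s(u,v) ≠ g →
      ¬ XP x.1 y.1 u.1 v.1) :
    ∀ e ∈ T.diags, e ≠ g → ¬ Crosses n s(x,y) e := by
  intro e
  induction e using Sym2.ind with
  | _ u v =>
    intro he hne hc
    rw [crosses_iff] at hc
    rcases Nat.lt_trichotomy u.1 v.1 with h|h|h
    · exact key u v h he hne hc
    · exact xp_irrefl (show XP x.1 y.1 u.1 u.1 by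
        have : u = v := Fin.ext h
        subst this; exact hc)
    · rw [Sym2.eq_swap (a := u)] at he hne
      exact key v u h he hne (xp_swap_right hc)

lemma noncross_all' {T : Triangulation n} (x y : Fin n)
    (key : ∀ u v : Fin n, u.1 < v.1 → s(u,v) ∈ T.diags → s(u,v) ≠ s(x,y) →
      ¬ XP x.1 y.1 u.1 v.1) :
    ∀ e ∈ T.diags, ¬ Crosses n s(x,y) e := by
  intro e he hc
  by_cases hne : e = s(x,y)
  · subst hne
    rw [crosses_iff] at hc
    exact xp_self hc
  · exact noncross_all x y s(x,y) key e he hne hc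

lemma sym2_ne {a b c d : Fin n}
    (h : ¬((a.1 = c.1 ∧ b.1 = d.1) ∨ (a.1 = d.1 ∧ b.1 = c.1))) : s(a,b) ≠ s(c,d) := by
  rw [Ne, Sym2.eq_iff]
  rintro (⟨h1, h2⟩ | ⟨h1, h2⟩)
  · exact h (Or.inl ⟨congrArg Fin.val h1, congrArg Fin.val h2⟩)
  · exact h (Or.inr ⟨congrArg Fin.val h1, congrArg Fin.val h2⟩)

/-- Conclusion of the flip lemma: `dst` is the unique diagonal exchangeable with `d`. -/
def FC (n : ℕ) (T : Triangulation n) (d dst : Sym2 (Fin n)) : Prop :=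
  IsDiag n dst ∧ Crosses n d dst ∧ dst ∉ T.diags ∧
  (∀ e ∈ T.diags, e ≠ d → ¬ Crosses n dst e) ∧
  (∀ f, IsDiag n f → f ∉ T.diags → (∀ e ∈ T.diags, e ≠ d → ¬ Crosses n f e) → f = dst)

theorem flip0 (hn : 5 ≤ n) (T : Triangulation n) (b : Fin n)
    (hb : s((⟨0, by omega⟩ : Fin n), b) ∈ T.diags) :
    ∃ dst, FC n T s((⟨0, by omega⟩ : Fin n), b) dst := by
  classical
  set z0 : Fin n := ⟨0, by omega⟩ with hz0def
  have hz : z0.1 = 0 := rfl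
  have hd := isDiag_iff.1 (T.isDiag _ hb)
  have h1n : (0 + 1) % n = 1 := Nat.mod_eq_of_lt (by omega)
  rw [hz, h1n] at hd
  have hB2 : 2 ≤ b.1 := by omega
  have hBlt : b.1 < n := b.isLt
  have hBn : b.1 ≤ n - 2 := by
    rcases Nat.lt_or_ge b.1 (n-1) with h | h
    · omega
    · exfalso
      have hb1 : b.1 = n - 1 := by omega
      rw [succ_mod hBlt] at hd
      simp [hb1] at hd
  -- inner apex p
  set Pset : Finset (Fin n) :=
    Finset.univ.filter (fun x : Fin n => 0 < x.1 ∧ x.1 < b.1 ∧ (s(z0, x) ∈ T.diags ∨ x.1 = 1))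
    with hPdef
  have h1P : (⟨1, by omega⟩ : Fin n) ∈ Pset := by
    rw [hPdef, Finset.mem_filter]
    refine ⟨Finset.mem_univ _, ?_, ?_, Or.inr rfl⟩ <;> simp only [Fin.val_mk] <;> omega
  have hPne : Pset.Nonempty := ⟨_, h1P⟩
  set p := Pset.max' hPne with hpdef
  have hpmem := Pset.max'_mem hPne
  obtain ⟨-, hp0, hpb, hpS⟩ := Finset.mem_filter.1 hpmem
  have hpmax : ∀ x : Fin n, 0 < x.1 → x.1 < b.1 → s(z0, x) ∈ T.diags → x.1 ≤ p.1 := by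
    intro x h1 h2 h3
    exact Pset.le_max' x (Finset.mem_filter.2 ⟨Finset.mem_univ _, h1, h2, Or.inl h3⟩)
  -- side (p, b)
  have hpbT : s(p, b) ∈ T.diags ∨ p.1 + 1 = b.1 := by
    by_cases hadj : p.1 + 1 = b.1
    · exact Or.inr hadj
    · left
      apply T.maximal
      · rw [isDiag_iff]
        refine ⟨by omega, ?_, ?_⟩
        · rw [Nat.mod_eq_of_lt (by omega)]; omega
        · rw [succ_mod hBlt]
          split <;> omega
      · apply noncross_all'
        intro u v huv hmem hne hXP
        have hcase : (p.1 < u.1 ∧ u.1 < b.1 ∧ b.1 < v.1) ∨ (u.1 < p.1 ∧ p.1 < v.1 ∧ v.1 < b.1) := by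
          unfold XP at hXP; omega
        rcases hcase with ⟨h1, h2, h3⟩ | ⟨h1, h2, h3⟩
        · exact T.noncross _ hb _ hmem (crosses_iff.2 (by unfold XP; omega))
        · rcases Nat.eq_zero_or_pos u.1 with hu0 | hu0
          · have : u = z0 := Fin.ext (by omega)
            subst this
            have := hpmax v (by omega) (by omega) hmem
            omega
          · rcases hpS with hpT | hp1
            · exact T.noncross _ hpT _ hmem (crosses_iff.2 (by rw [hz]; unfold XP; omega))
            · omega
  -- outer apex q
  set Qset : Finset (Fin n) :=
    Finset.univ.filter (fun y : Fin n => b.1 < y.1 ∧ (s(b, y) ∈ T.diags ∨ y.1 = b.1 + 1))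
    with hQdef
  have hq1 : (⟨b.1 + 1, by omega⟩ : Fin n) ∈ Qset := by
    rw [hQdef, Finset.mem_filter]
    refine ⟨Finset.mem_univ _, ?_, Or.inr rfl⟩
    simp only [Fin.val_mk]; omega
  have hQne : Qset.Nonempty := ⟨_, hq1⟩
  set q := Qset.max' hQne with hqdef
  have hqmem := Qset.max'_mem hQne
  obtain ⟨-, hbq, hqS⟩ := Finset.mem_filter.1 hqmem
  have hqlt : q.1 < n := q.isLt
  have hqmax : ∀ y : Fin n, b.1 < y.1 → s(b, y) ∈ T.diags → y.1 ≤ q.1 := by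
    intro y h1 h2
    exact Qset.le_max' y (Finset.mem_filter.2 ⟨Finset.mem_univ _, h1, Or.inl h2⟩)
  have hq0T : s(z0, q) ∈ T.diags ∨ q.1 = n - 1 := by
    by_cases hqn : q.1 = n - 1
    · exact Or.inr hqn
    · left
      apply T.maximal
      · rw [isDiag_iff, hz, h1n]
        refine ⟨by omega, by omega, ?_⟩
        rw [Nat.mod_eq_of_lt (by omega)]; omega
      · apply noncross_all'
        intro u v huv hmem hne hXP
        rw [hz] at hXP
        have hcase : 0 < u.1 ∧ u.1 < q.1 ∧ q.1 < v.1 := by unfold XP at hXP; omega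
        obtain ⟨h1, h2, h3⟩ := hcase
        rcases Nat.lt_trichotomy u.1 b.1 with hub | hub | hub
        · exact T.noncross _ hb _ hmem (crosses_iff.2 (by rw [hz]; unfold XP; omega))
        · have : u = b := Fin.ext hub
          subst this
          have := hqmax v (by omega) hmem
          omega
        · rcases hqS with hqT | hq1'
          · exact T.noncross _ hqT _ hmem (crosses_iff.2 (by unfold XP; omega))
          · omega
  refine ⟨s(p, q), ?_, ?_, ?_, ?_, ?_⟩
  · rw [isDiag_iff]
    refine ⟨by omega, ?_, ?_⟩
    · rw [Nat.mod_eq_of_lt (by omega)]; omega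
    · rw [succ_mod hqlt]; split <;> omega
  · exact crosses_iff.2 (by rw [hz]; unfold XP; omega)
  · intro hmem
    exact T.noncross _ hb _ hmem (crosses_iff.2 (by rw [hz]; unfold XP; omega))
  · apply noncross_all
    intro u v huv hmem hne hXP
    have hcase : (p.1 < u.1 ∧ u.1 < q.1 ∧ q.1 < v.1) ∨ (u.1 < p.1 ∧ p.1 < v.1 ∧ v.1 < q.1) := by
      unfold XP at hXP; omega
    rcases hcase with ⟨h1, h2, h3⟩ | ⟨h1, h2, h3⟩
    · -- u ∈ (p,q), v > q
      rcases Nat.lt_trichotomy u.1 b.1 with hub | hub | hub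
      · -- u ∈ (p,b)
        rcases hpbT with hpT | hadj
        · exact T.noncross _ hpT _ hmem (crosses_iff.2 (by unfold XP; omega))
        · omega
      · have : u = b := Fin.ext hub
        subst this
        have := hqmax v (by omega) hmem
        omega
      · -- u ∈ (b,q)
        rcases hqS with hqT | hadj
        · exact T.noncross _ hqT _ hmem (crosses_iff.2 (by unfold XP; omega))
        · omega
    · -- u < p, v ∈ (p,q)
      rcases Nat.lt_trichotomy v.1 b.1 with hvb | hvb | hvb
      · -- v ∈ (p,b)
        rcases Nat.eq_zero_or_pos u.1 with hu0 | hu0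
        · have : u = z0 := Fin.ext (by omega)
          subst this
          have := hpmax v (by omega) (by omega) hmem
          omega
        · rcases hpS with hpT | hp1
          · exact T.noncross _ hpT _ hmem (crosses_iff.2 (by rw [hz]; unfold XP; omega))
          · omega
      · -- v = b
        have : v = b := Fin.ext hvb
        subst this
        rcases Nat.eq_zero_or_pos u.1 with hu0 | hu0
        · refine hne ?_
          have huz : u = z0 := Fin.ext (by omega)
          rw [huz]
        · rcases hpS with hpT | hp1
          · exact T.noncross _ hpT _ hmem (crosses_iff.2 (by rw [hz]; unfold XP; omega))
          · omega
      · -- v ∈ (b,q)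
        rcases Nat.eq_zero_or_pos u.1 with hu0 | hu0
        · rcases hqS with hqT | hadj
          · exact T.noncross _ hqT _ hmem (crosses_iff.2 (by unfold XP; omega))
          · omega
        · exact T.noncross _ hb _ hmem (crosses_iff.2 (by rw [hz]; unfold XP; omega))
  · -- uniqueness
    have main : ∀ u v : Fin n, u.1 < v.1 → s(u,v) ∉ T.diags →
        (∀ e ∈ T.diags, e ≠ s(z0, b) → ¬ Crosses n s(u,v) e) → XP u.1 v.1 0 b.1 →
        s(u,v) = s(p,q) := by
      intro u v huv hfN hfnc hXP
      have hcase : 0 < u.1 ∧ u.1 < b.1 ∧ b.1 < v.1 := by unfold XP at hXP; omega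
      obtain ⟨h1, h2, h3⟩ := hcase
      have hup : u.1 = p.1 := by
        rcases Nat.lt_trichotomy u.1 p.1 with h | h | h
        · exfalso
          rcases hpS with hpT | hp1
          · exact hfnc s(z0, p) hpT (sym2_ne (by rw [hz]; omega))
              (crosses_iff.2 (by rw [hz]; unfold XP; omega))
          · omega
        · exact h
        · exfalso
          rcases hpbT with hpT | hadj
          · exact hfnc s(p, b) hpT (sym2_ne (by rw [hz]; omega))
              (crosses_iff.2 (by unfold XP; omega))
          · omega
      have hvq : v.1 = q.1 := by
        rcases Nat.lt_trichotomy v.1 q.1 with h | h | h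
        · exfalso
          rcases hqS with hqT | hadj
          · exact hfnc s(b, q) hqT (sym2_ne (by rw [hz]; omega))
              (crosses_iff.2 (by unfold XP; omega))
          · omega
        · exact h
        · exfalso
          rcases hq0T with hqT | hqn
          · exact hfnc s(z0, q) hqT (sym2_ne (by rw [hz]; omega))
              (crosses_iff.2 (by rw [hz]; unfold XP; omega))
          · have := v.isLt; omega
      have h1 : u = p := Fin.ext hup
      have h2 : v = q := Fin.ext hvq
      rw [h1, h2]
    intro f hfD hfN hfnc
    have hC : Crosses n f s(z0, b) := by
      by_contra hC
      refine hfN (T.maximal f hfD ?_)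
      intro e he
      by_cases hed : e = s(z0, b)
      · rw [hed]; exact hC
      · exact hfnc e he hed
    revert hfD hfN hfnc hC
    induction f using Sym2.ind with
    | _ u v =>
      intro hfD hfN hfnc hC
      rw [crosses_iff, hz] at hC
      rcases Nat.lt_trichotomy u.1 v.1 with h | h | h
      · exact main u v h hfN hfnc hC
      · exfalso; unfold XP at hC; omega
      · rw [Sym2.eq_swap (a := u)] at hfN hfnc ⊢
        exact main v u h hfN hfnc (by unfold XP at hC ⊢; omega)

lemma crosses_irrefl {d : Sym2 (Fin n)} (h : Crosses n d d) : False := by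
  induction d using Sym2.ind with
  | _ u v => exact xp_self (crosses_iff.1 h)

lemma fc_rot (hn : 5 ≤ n) {T : Triangulation n} {d dst : Sym2 (Fin n)}
    (h : FC n T d dst) : FC n (rot1 hn T) (rS d) (rS dst) := by
  obtain ⟨h1, h2, h3, h4, h5⟩ := h
  have hn0 : 0 < n := by omega
  refine ⟨isDiag_rot hn h1, crosses_rot h2, ?_, ?_, ?_⟩
  · intro hmem
    exact h3 ((mem_rot1 hn).1 hmem)
  · intro e he hne hc
    obtain ⟨e', he', rfl⟩ := Finset.mem_image.1 he
    exact h4 e' he' (fun hh => hne (by rw [hh])) ((crosses_rot_iff hn0).1 hc)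
  · intro f hfD hfN hfnc
    have hfeq : rS ((rS (n := n))^[n-1] f) = f := by
      have h0 := Function.iterate_succ_apply' (rS (n := n)) (n-1) f
      rw [show (n-1).succ = n by omega, rS_iter_n] at h0
      exact h0.symm
    set f' := (rS (n := n))^[n-1] f with hf'
    have : f' = dst := by
      apply h5
      · rw [← isDiag_rot_iff hn, hfeq]; exact hfD
      · intro hmem
        exact hfN (by rw [← hfeq]; exact (mem_rot1 hn).2 hmem)
      · intro e he hne hc
        refine hfnc (rS e) ((mem_rot1 hn).2 he) (fun hh => hne (rS_inj hn0 hh)) ?_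
        rw [← hfeq]
        exact crosses_rot hc
    rw [← hfeq, this]

lemma fc_rotk (hn : 5 ≤ n) (k : ℕ) {T : Triangulation n} {d dst : Sym2 (Fin n)}
    (h : FC n T d dst) :
    FC n ((rot1 hn)^[k] T) ((rS (n := n))^[k] d) ((rS (n := n))^[k] dst) := by
  induction k with
  | zero => exact h
  | succ k ih =>
    rw [Function.iterate_succ_apply', Function.iterate_succ_apply',
      Function.iterate_succ_apply']
    exact fc_rot hn ih

theorem flip_main (hn : 5 ≤ n) (T : Triangulation n) (d : Sym2 (Fin n))
    (hd : d ∈ T.diags) : ∃ dst, FC n T d dst := by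
  have hsorted : ∃ a b : Fin n, d = s(a,b) ∧ a.1 < b.1 := by
    obtain ⟨a, b, rfl, hab, -, -⟩ := T.isDiag d hd
    rcases Nat.lt_trichotomy a.1 b.1 with h | h | h
    · exact ⟨a, b, rfl, h⟩
    · exact absurd (Fin.ext h) hab
    · exact ⟨b, a, Sym2.eq_swap, h⟩
  obtain ⟨a, b, rfl, hab⟩ := hsorted
  have hn0 : 0 < n := by omega
  set k := n - a.1 with hk
  have hkn : k ≤ n := by omega
  have hd' : (rS (n := n))^[k] s(a,b) ∈ ((rot1 hn)^[k] T).diags := by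
    rw [rot1_iter_diags]
    exact Finset.mem_image_of_mem _ hd
  have hrep : (rS (n := n))^[k] s(a,b) = s(rF^[k] a, rF^[k] b) := by
    rw [rS_iter, Sym2.map_pair_eq]
  have ha0 : rF^[k] a = (⟨0, by omega⟩ : Fin n) := by
    apply Fin.ext
    rw [rF_iter]
    simp only [Fin.val_mk]
    rw [show a.1 + k = n by omega, Nat.mod_self]
  rw [hrep, ha0] at hd'
  obtain ⟨dst', hdst'⟩ := flip0 hn ((rot1 hn)^[k] T) (rF^[k] b) hd'
  have h2 := fc_rotk hn (n - k) hdst'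
  rw [← ha0, ← hrep] at h2
  rw [← Function.iterate_add_apply, ← Function.iterate_add_apply,
    show n - k + k = n by omega, rot1_iter_n, rS_iter_n] at h2
  exact ⟨_, h2⟩

def flipT (hn : 5 ≤ n) (T : Triangulation n) (d dst : Sym2 (Fin n))
    (hd : d ∈ T.diags) (h : FC n T d dst) : Triangulation n where
  diags := insert dst (T.diags.erase d)
  isDiag := by
    intro e he
    rcases Finset.mem_insert.1 he with rfl | he
    · exact h.1
    · exact T.isDiag e (Finset.mem_of_mem_erase he)
  noncross := by
    intro e he f hf hc
    rcases Finset.mem_insert.1 he with he1 | he1 <;> rcases Finset.mem_insert.1 hf with hf1 | hf1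
    · subst he1; subst hf1; exact crosses_irrefl hc
    · subst he1
      exact h.2.2.2.1 f (Finset.mem_of_mem_erase hf1) (Finset.ne_of_mem_erase hf1) hc
    · subst hf1
      exact h.2.2.2.1 e (Finset.mem_of_mem_erase he1) (Finset.ne_of_mem_erase he1) (crosses_symm hc)
    · exact T.noncross e (Finset.mem_of_mem_erase he1) f (Finset.mem_of_mem_erase hf1) hc
  maximal := by
    intro g hg hnc
    by_cases hgd : Crosses n g d
    · have hgT : g ∉ T.diags := fun hgT => T.noncross g hgT d hd hgd
      have : g = dst := by
        apply h.2.2.2.2 g hg hgT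
        intro e he hne
        exact hnc e (Finset.mem_insert_of_mem (Finset.mem_erase.2 ⟨hne, he⟩))
      rw [this]
      exact Finset.mem_insert_self _ _
    · have hgT : g ∈ T.diags := by
        apply T.maximal g hg
        intro e he hc
        by_cases hed : e = d
        · rw [hed] at hc; exact hgd hc
        · exact hnc e (Finset.mem_insert_of_mem (Finset.mem_erase.2 ⟨hed, he⟩)) hc
      have hgne : g ≠ d := by
        rintro rfl
        exact hnc dst (Finset.mem_insert_self _ _) h.2.1
      exact Finset.mem_insert_of_mem (Finset.mem_erase.2 ⟨hgne, hgT⟩)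

lemma isFlip_flipT (hn : 5 ≤ n) {T : Triangulation n} {d dst : Sym2 (Fin n)}
    (hd : d ∈ T.diags) (h : FC n T d dst) : IsFlip T d (flipT hn T d dst hd h) := by
  refine ⟨hd, ?_, ?_⟩
  · intro hmem
    rcases Finset.mem_insert.1 hmem with rfl | hmem
    · exact h.2.2.1 hd
    · exact (Finset.mem_erase.1 hmem).1 rfl
  · intro e he hne
    exact Finset.mem_insert_of_mem (Finset.mem_erase.2 ⟨hne, he⟩)

lemma isFlip_diags {T T' : Triangulation n} {d dst : Sym2 (Fin n)}
    (h : IsFlip T d T') (hFC : FC n T d dst) :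
    T'.diags = insert dst (T.diags.erase d) := by
  obtain ⟨hd, hdn, hsub⟩ := h
  have huniq : ∀ e ∈ T'.diags, e ∉ T.diags → e = dst := by
    intro e he hen
    apply hFC.2.2.2.2 e (T'.isDiag e he) hen
    intro e' he' hne hc
    exact T'.noncross e he e' (hsub e' he' hne) hc
  have hdst : dst ∈ T'.diags := by
    apply T'.maximal dst hFC.1
    intro e he hc
    by_cases heT : e ∈ T.diags
    · exact hFC.2.2.2.1 e heT (fun hh => hdn (hh ▸ he)) hc
    · rw [huniq e he heT] at hc
      exact crosses_irrefl hc
  apply Finset.Subset.antisymm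
  · intro e he
    by_cases heT : e ∈ T.diags
    · exact Finset.mem_insert_of_mem (Finset.mem_erase.2 ⟨fun hh => hdn (hh ▸ he), heT⟩)
    · rw [huniq e he heT]
      exact Finset.mem_insert_self _ _
  · intro e he
    rcases Finset.mem_insert.1 he with rfl | he
    · exact hdst
    · exact hsub e (Finset.mem_of_mem_erase he) (Finset.mem_erase.1 he).1

theorem flip_spec (hn : 5 ≤ n) (T : Triangulation n) (d : Sym2 (Fin n))
    (hd : d ∈ T.diags) :
    ∃ T' dst, IsFlip T d T' ∧ FC n T d dst ∧
      T'.diags = insert dst (T.diags.erase d) := by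
  obtain ⟨dst, hFC⟩ := flip_main hn T d hd
  exact ⟨flipT hn T d dst hd hFC, dst, isFlip_flipT hn hd hFC,
    hFC, isFlip_diags (isFlip_flipT hn hd hFC) hFC⟩

lemma newDiag_eq {T T' : Triangulation n} {d dst f : Sym2 (Fin n)}
    (h : IsFlip T d T') (hFC : FC n T d dst) (hf : NewDiag T T' f) : f = dst := by
  have := isFlip_diags h hFC
  rcases Finset.mem_insert.1 (this ▸ hf.1) with rfl | hmem
  · rfl
  · exact absurd (Finset.mem_of_mem_erase hmem) hf.2

lemma newDiag_dst {T T' : Triangulation n} {d dst : Sym2 (Fin n)}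
    (h : IsFlip T d T') (hFC : FC n T d dst) : NewDiag T T' dst := by
  have hdi := isFlip_diags h hFC
  exact ⟨hdi ▸ Finset.mem_insert_self _ _, hFC.2.2.1⟩

lemma isFlip_symm {T T' : Triangulation n} {d dst : Sym2 (Fin n)}
    (h : IsFlip T d T') (hFC : FC n T d dst) : IsFlip T' dst T := by
  have hdi := isFlip_diags h hFC
  refine ⟨hdi ▸ Finset.mem_insert_self _ _, hFC.2.2.1, ?_⟩
  intro e he hne
  rw [hdi] at he
  rcases Finset.mem_insert.1 he with rfl | he
  · exact absurd rfl hne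
  · exact Finset.mem_of_mem_erase he

lemma flipAdj_symm' (hn : 5 ≤ n) {T T' : Triangulation n} (h : FlipAdj T T') :
    FlipAdj T' T := by
  obtain ⟨d, hflip⟩ := h
  obtain ⟨dst, hFC⟩ := flip_main hn T d hflip.1
  exact ⟨dst, isFlip_symm hflip hFC⟩

lemma sorted_of_isDiag (hn : 5 ≤ n) {a b : Fin n} (hab : a.1 < b.1) (hd : IsDiag n s(a,b)) :
    a.1 + 2 ≤ b.1 ∧ (b.1 = n - 1 → 0 < a.1) := by
  rw [isDiag_iff] at hd
  obtain ⟨h1, h2, h3⟩ := hd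
  rw [Nat.mod_eq_of_lt (show a.1 + 1 < n by have := b.isLt; omega)] at h2
  rw [succ_mod b.isLt] at h3
  constructor
  · omega
  · intro hb
    rw [if_pos hb] at h3
    omega

def fan0 (hn : 5 ≤ n) : Triangulation n where
  diags := ((Finset.univ : Finset (Fin n)).filter (fun j => 2 ≤ j.1 ∧ j.1 ≤ n-2)).image
    (fun j => s((⟨0, by omega⟩ : Fin n), j))
  isDiag := by
    intro e he
    obtain ⟨j, hj, rfl⟩ := Finset.mem_image.1 he
    obtain ⟨-, hj1, hj2⟩ := Finset.mem_filter.1 hj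
    rw [isDiag_iff]
    refine ⟨by simp only [Fin.val_mk]; omega, ?_, ?_⟩
    · simp only [Fin.val_mk]
      rw [Nat.mod_eq_of_lt (by omega)]; omega
    · simp only [Fin.val_mk]
      rw [Nat.mod_eq_of_lt (by omega)]; omega
  noncross := by
    intro e he f hf hc
    obtain ⟨i, hi, rfl⟩ := Finset.mem_image.1 he
    obtain ⟨j, hj, rfl⟩ := Finset.mem_image.1 hf
    rw [crosses_iff] at hc
    simp only [Fin.val_mk] at hc
    unfold XP at hc
    omega
  maximal := by
    intro g hg hnc
    have main : ∀ u v : Fin n, u.1 < v.1 → IsDiag n s(u,v) →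
        (∀ e ∈ (((Finset.univ : Finset (Fin n)).filter (fun j => 2 ≤ j.1 ∧ j.1 ≤ n-2)).image
          (fun j => s((⟨0, by omega⟩ : Fin n), j))), ¬ Crosses n s(u,v) e) →
        s(u,v) ∈ (((Finset.univ : Finset (Fin n)).filter (fun j => 2 ≤ j.1 ∧ j.1 ≤ n-2)).image
          (fun j => s((⟨0, by omega⟩ : Fin n), j))) := by
      intro u v huv hD hnc
      have hs := sorted_of_isDiag hn huv hD
      rcases Nat.eq_zero_or_pos u.1 with hu0 | hu0
      · -- u = 0 : it is a fan diagonal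
        apply Finset.mem_image.2
        refine ⟨v, Finset.mem_filter.2 ⟨Finset.mem_univ _, by omega, ?_⟩, ?_⟩
        · have := v.isLt; omega
        · have : u = (⟨0, by omega⟩ : Fin n) := Fin.ext hu0
          rw [this]
      · exfalso
        have hvn : v.1 ≤ n - 1 := by have := v.isLt; omega
        refine hnc s((⟨0, by omega⟩ : Fin n), (⟨u.1 + 1, by omega⟩ : Fin n))
          (Finset.mem_image.2 ⟨_, Finset.mem_filter.2 ⟨Finset.mem_univ _, by
            simp only [Fin.val_mk]; omega, by simp only [Fin.val_mk]; omega⟩, rfl⟩) ?_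
        rw [crosses_iff]
        simp only [Fin.val_mk]
        unfold XP
        omega
    revert hg hnc
    induction g using Sym2.ind with
    | _ u v =>
      intro hg hnc
      rcases Nat.lt_trichotomy u.1 v.1 with h | h | h
      · exact main u v h hg hnc
      · exfalso
        rw [isDiag_iff] at hg
        exact hg.1 h
      · rw [Sym2.eq_swap (a := u)] at hg hnc ⊢
        exact main v u h hg hnc

lemma fan0_mem_z0 (hn : 5 ≤ n) : ∀ e ∈ (fan0 hn).diags, (⟨0, by omega⟩ : Fin n) ∈ e := by
  intro e he
  obtain ⟨j, hj, rfl⟩ := Finset.mem_image.1 he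
  exact Sym2.mem_mk_left _ _

lemma fan0_full (hn : 5 ≤ n) :
    ∀ s, IsDiag n s → (⟨0, by omega⟩ : Fin n) ∈ s → s ∈ (fan0 hn).diags := by
  intro s hs h0
  obtain ⟨w, rfl⟩ := Sym2.mem_iff_exists.1 h0
  rw [isDiag_iff] at hs
  simp only [Fin.val_mk] at hs
  rw [Nat.mod_eq_of_lt (show 0+1 < n by omega), succ_mod w.isLt] at hs
  apply Finset.mem_image.2
  refine ⟨w, Finset.mem_filter.2 ⟨Finset.mem_univ _, ?_, ?_⟩, rfl⟩
  · omega
  · have := w.isLt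
    rcases hs with ⟨h1, h2, h3⟩
    by_cases hw : w.1 = n - 1
    · rw [if_pos hw] at h3; omega
    · omega

def fanV (hn : 5 ≤ n) (v : Fin n) : Triangulation n := (rot1 hn)^[v.1] (fan0 hn)

lemma isDiag_rotk (hn : 5 ≤ n) (k : ℕ) {d : Sym2 (Fin n)} (h : IsDiag n d) :
    IsDiag n ((rS (n := n))^[k] d) := by
  induction k with
  | zero => exact h
  | succ k ih => rw [Function.iterate_succ_apply']; exact isDiag_rot hn ih

lemma fanV_mem_v (hn : 5 ≤ n) (v : Fin n) : ∀ e ∈ (fanV hn v).diags, v ∈ e := by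
  intro e he
  rw [fanV, rot1_iter_diags] at he
  obtain ⟨e', he', rfl⟩ := Finset.mem_image.1 he
  rw [rS_iter]
  apply Sym2.mem_map.2
  refine ⟨(⟨0, by omega⟩ : Fin n), fan0_mem_z0 hn e' he', ?_⟩
  apply Fin.ext
  rw [rF_iter]
  simp only [Fin.val_mk]
  rw [Nat.zero_add, Nat.mod_eq_of_lt v.isLt]

lemma fanV_full (hn : 5 ≤ n) (v : Fin n) :
    ∀ s, IsDiag n s → v ∈ s → s ∈ (fanV hn v).diags := by
  intro s hs hv
  rw [fanV, rot1_iter_diags]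
  have hback : (rS (n := n))^[v.1] ((rS (n := n))^[n - v.1] s) = s := by
    rw [← Function.iterate_add_apply, show v.1 + (n - v.1) = n by have := v.isLt; omega,
      rS_iter_n]
  refine Finset.mem_image.2 ⟨(rS (n := n))^[n - v.1] s, ?_, hback⟩
  apply fan0_full hn
  · exact isDiag_rotk hn _ hs
  · rw [rS_iter]
    apply Sym2.mem_map.2
    refine ⟨v, hv, ?_⟩
    apply Fin.ext
    rw [rF_iter]
    simp only [Fin.val_mk]
    rw [show v.1 + (n - v.1) = n by have := v.isLt; omega, Nat.mod_self]

lemma exists_cross_through (hn : 5 ≤ n) {a b v : Fin n} (hab : a.1 < b.1)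
    (hd : IsDiag n s(a,b)) (hv1 : v.1 ≠ a.1) (hv2 : v.1 ≠ b.1) :
    ∃ w : Fin n, IsDiag n s(v,w) ∧ Crosses n s(v,w) s(a,b) := by
  obtain ⟨hab2, hbn⟩ := sorted_of_isDiag hn hab hd
  have hbl := b.isLt
  have hvl := v.isLt
  rcases Nat.lt_trichotomy v.1 a.1 with hva | hva | hva
  · refine ⟨⟨a.1 + 1, by omega⟩, ?_, ?_⟩
    · rw [isDiag_iff]
      simp only [Fin.val_mk]
      rw [Nat.mod_eq_of_lt (by omega), Nat.mod_eq_of_lt (by omega)]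
      omega
    · rw [crosses_iff]; simp only [Fin.val_mk]; unfold XP; omega
  · omega
  · rcases Nat.lt_trichotomy v.1 b.1 with hvb | hvb | hvb
    · -- a < v < b
      rcases Nat.eq_zero_or_pos a.1 with ha0 | ha0
      · have hb2 : b.1 ≤ n - 2 := by omega
        refine ⟨⟨b.1 + 1, by omega⟩, ?_, ?_⟩
        · rw [isDiag_iff]
          simp only [Fin.val_mk]
          rw [Nat.mod_eq_of_lt (by omega), succ_mod (show b.1+1 < n by omega)]
          split <;> omega
        · rw [crosses_iff]; simp only [Fin.val_mk]; unfold XP; omega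
      · refine ⟨⟨a.1 - 1, by omega⟩, ?_, ?_⟩
        · rw [isDiag_iff]
          simp only [Fin.val_mk]
          rw [Nat.mod_eq_of_lt (by omega), show a.1 - 1 + 1 = a.1 by omega,
            Nat.mod_eq_of_lt (by omega)]
          omega
        · rw [crosses_iff]; simp only [Fin.val_mk]; unfold XP; omega
    · omega
    · -- v > b
      refine ⟨⟨a.1 + 1, by omega⟩, ?_, ?_⟩
      · rw [isDiag_iff]
        simp only [Fin.val_mk]
        rw [succ_mod hvl, Nat.mod_eq_of_lt (by omega)]
        split <;> omega
      · rw [crosses_iff]; simp only [Fin.val_mk]; unfold XP; omega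

/-- any triangulation containing all diagonals through `v` equals `fanV`. -/
lemma eq_fanV_of_full (hn : 5 ≤ n) (v : Fin n) {X : Triangulation n}
    (hX : ∀ s, IsDiag n s → v ∈ s → s ∈ X.diags) : X = fanV hn v := by
  have key : ∀ (Y : Triangulation n), (∀ s, IsDiag n s → v ∈ s → s ∈ Y.diags) →
      ∀ e ∈ Y.diags, v ∈ e := by
    intro Y hY e
    induction e using Sym2.ind with
    | _ a b =>
      intro he
      by_contra hv
      rw [Sym2.mem_iff] at hv
      push_neg at hv
      have main : ∀ a b : Fin n, a.1 < b.1 → s(a,b) ∈ Y.diags → v ≠ a → v ≠ b → False := by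
        intro a b hab hmem h1 h2
        obtain ⟨w, hwD, hwC⟩ := exists_cross_through hn hab (Y.isDiag _ hmem)
          (fun hh => h1 (Fin.ext hh)) (fun hh => h2 (Fin.ext hh))
        exact Y.noncross _ (hY _ hwD (Sym2.mem_mk_left _ _)) _ hmem hwC
      rcases Nat.lt_trichotomy a.1 b.1 with h | h | h
      · exact main a b h he hv.1 hv.2
      · -- degenerate: s(a,a) cannot be a diagonal
        have : a = b := Fin.ext h
        subst this
        have := isDiag_iff.1 (Y.isDiag _ he)
        exact this.1 rfl
      · rw [Sym2.eq_swap (a := a)] at he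
        exact main b a h he hv.2 hv.1
  apply tri_ext
  apply Finset.Subset.antisymm
  · intro e he
    exact fanV_full hn v e (X.isDiag e he) (key X hX e he)
  · intro e he
    exact hX e ((fanV hn v).isDiag e he) (key _ (fanV_full hn v) e he)

lemma isDiag_sorted_reps {d : Sym2 (Fin n)} (hd : IsDiag n d) :
    ∃ u v : Fin n, d = s(u,v) ∧ u.1 < v.1 := by
  obtain ⟨a, b, rfl, hab, -, -⟩ := hd
  rcases Nat.lt_trichotomy a.1 b.1 with h | h | h
  · exact ⟨a, b, rfl, h⟩
  · exact absurd (Fin.ext h) hab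
  · exact ⟨b, a, Sym2.eq_swap, h⟩

/-- step conclusion: a single flip in `T` that removes a diagonal missing `v`
and creates a diagonal through `v`. -/
def SC (v : Fin n) (T T' : Triangulation n) : Prop :=
  ∃ e z, IsFlip T e T' ∧ NewDiag T T' s(v,z) ∧ v ∉ e

theorem step0 (hn : 5 ≤ n) (T : Triangulation n) (j : Fin n)
    (hjD : IsDiag n s((⟨0, by omega⟩ : Fin n), j)) (hjN : s((⟨0, by omega⟩ : Fin n), j) ∉ T.diags) :
    ∃ T', SC (⟨0, by omega⟩ : Fin n) T T' := by
  classical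
  set z0 : Fin n := ⟨0, by omega⟩ with hz0def
  have hz : z0.1 = 0 := rfl
  rw [isDiag_iff] at hjD
  rw [hz, Nat.mod_eq_of_lt (show 0+1 < n by omega), succ_mod j.isLt] at hjD
  have hJ : 2 ≤ j.1 ∧ j.1 ≤ n - 2 := by
    have := j.isLt
    rcases hjD with ⟨h1, h2, h3⟩
    by_cases hj : j.1 = n-1
    · rw [if_pos hj] at h3; omega
    · omega
  -- the two fan-neighbours around the gap at j
  set Xset : Finset (Fin n) :=
    Finset.univ.filter (fun x : Fin n => 1 ≤ x.1 ∧ x.1 < j.1 ∧ (x.1 = 1 ∨ s(z0,x) ∈ T.diags))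
    with hXdef
  have hX1 : (⟨1, by omega⟩ : Fin n) ∈ Xset := by
    rw [hXdef, Finset.mem_filter]
    refine ⟨Finset.mem_univ _, ?_, ?_, Or.inl rfl⟩ <;> simp only [Fin.val_mk] <;> omega
  have hXne : Xset.Nonempty := ⟨_, hX1⟩
  set x := Xset.max' hXne with hxdef
  obtain ⟨-, hx1, hxj, hxS⟩ := Finset.mem_filter.1 (Xset.max'_mem hXne)
  have hxmax : ∀ w : Fin n, 1 ≤ w.1 → w.1 < j.1 → s(z0,w) ∈ T.diags → w.1 ≤ x.1 := by
    intro w h1 h2 h3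
    exact Xset.le_max' w (Finset.mem_filter.2 ⟨Finset.mem_univ _, h1, h2, Or.inr h3⟩)
  set Yset : Finset (Fin n) :=
    Finset.univ.filter (fun y : Fin n => j.1 < y.1 ∧ (y.1 = n-1 ∨ s(z0,y) ∈ T.diags))
    with hYdef
  have hYn : (⟨n-1, by omega⟩ : Fin n) ∈ Yset := by
    rw [hYdef, Finset.mem_filter]
    refine ⟨Finset.mem_univ _, ?_, Or.inl rfl⟩
    simp only [Fin.val_mk]; omega
  have hYne : Yset.Nonempty := ⟨_, hYn⟩
  set y := Yset.min' hYne with hydef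
  obtain ⟨-, hjy, hyS⟩ := Finset.mem_filter.1 (Yset.min'_mem hYne)
  have hymin : ∀ w : Fin n, j.1 < w.1 → s(z0,w) ∈ T.diags → y.1 ≤ w.1 := by
    intro w h1 h2
    exact Yset.min'_le w (Finset.mem_filter.2 ⟨Finset.mem_univ _, h1, Or.inr h2⟩)
  have hyn : y.1 ≤ n - 1 := by have := y.isLt; omega
  -- the gap: no fan diagonal ends strictly between x and y
  have hgap : ∀ w : Fin n, x.1 < w.1 → w.1 < y.1 → s(z0,w) ∉ T.diags := by
    intro w h1 h2 hw
    rcases Nat.lt_trichotomy w.1 j.1 with h | h | h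
    · have := hxmax w (by omega) h hw; omega
    · exact hjN (by rw [show j = w from Fin.ext h.symm]; exact hw)
    · have := hymin w h hw; omega
  -- the diagonal s(x,y) must be present
  have hxyT : s(x,y) ∈ T.diags := by
    apply T.maximal
    · rw [isDiag_iff]
      refine ⟨by omega, ?_, ?_⟩
      · rw [Nat.mod_eq_of_lt (show x.1+1 < n by omega)]; omega
      · rw [succ_mod y.isLt]; split <;> omega
    · apply noncross_all'
      intro u v huv hmem hne hXP
      have hcase : (x.1 < u.1 ∧ u.1 < y.1 ∧ y.1 < v.1) ∨ (u.1 < x.1 ∧ x.1 < v.1 ∧ v.1 < y.1) := by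
        unfold XP at hXP; omega
      rcases hcase with ⟨h1, h2, h3⟩ | ⟨h1, h2, h3⟩
      · rcases hyS with hy1 | hyT
        · omega
        · exact T.noncross _ hyT _ hmem (crosses_iff.2 (by rw [hz]; unfold XP; omega))
      · rcases Nat.eq_zero_or_pos u.1 with hu0 | hu0
        · have : u = z0 := Fin.ext (by omega)
          subst this
          exact hgap v (by omega) (by omega) hmem
        · rcases hxS with hx1' | hxT
          · omega
          · exact T.noncross _ hxT _ hmem (crosses_iff.2 (by rw [hz]; unfold XP; omega))
  obtain ⟨T', dst, hflip, hFC, hdiags⟩ := flip_spec hn T s(x,y) hxyT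
  obtain ⟨u, v, hrep, huv⟩ := isDiag_sorted_reps hFC.1
  have hC := hFC.2.1
  rw [hrep, crosses_iff] at hC
  have hcase : (x.1 < u.1 ∧ u.1 < y.1 ∧ y.1 < v.1) ∨ (u.1 < x.1 ∧ x.1 < v.1 ∧ v.1 < y.1) := by
    unfold XP at hC; omega
  have hnc := hFC.2.2.2.1
  rw [hrep] at hnc
  have hu0 : u.1 = 0 := by
    rcases hcase with ⟨h1, h2, h3⟩ | ⟨h1, h2, h3⟩
    · exfalso
      rcases hyS with hy1 | hyT
      · omega
      · refine hnc s(z0, y) hyT (sym2_ne (by rw [hz]; omega)) ?_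
        exact crosses_iff.2 (by rw [hz]; unfold XP; omega)
    · rcases Nat.eq_zero_or_pos u.1 with hu0 | hu0
      · exact hu0
      · exfalso
        rcases hxS with hx1' | hxT
        · omega
        · refine hnc s(z0, x) hxT (sym2_ne (by rw [hz]; omega)) ?_
          exact crosses_iff.2 (by rw [hz]; unfold XP; omega)
  refine ⟨T', s(x,y), v, hflip, ?_, ?_⟩
  · have : dst = s(z0, v) := by
      rw [hrep]
      have : u = z0 := Fin.ext hu0
      rw [this]
    rw [← this]
    exact newDiag_dst hflip hFC
  · rw [Sym2.mem_iff]
    push_neg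
    constructor <;> intro hh <;> rw [hh] at hz <;> omega

lemma rF_inj : Function.Injective (rF (n := n)) := by
  intro a b h
  have ha := a.isLt; have hb := b.isLt
  have : (a.1 + 1) % n = (b.1 + 1) % n := congrArg Fin.val h
  rw [succ_mod ha, succ_mod hb] at this
  apply Fin.ext
  split_ifs at this <;> omega

lemma mem_rS {w : Fin n} {e : Sym2 (Fin n)} : rF w ∈ rS e ↔ w ∈ e := by
  constructor
  · intro h
    obtain ⟨a, ha, haa⟩ := Sym2.mem_map.1 h
    rwa [← rF_inj haa]
  · intro h
    exact Sym2.mem_map.2 ⟨w, h, rfl⟩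

lemma isFlip_rot (hn : 5 ≤ n) {T T' : Triangulation n} {e : Sym2 (Fin n)}
    (h : IsFlip T e T') : IsFlip (rot1 hn T) (rS e) (rot1 hn T') := by
  obtain ⟨h1, h2, h3⟩ := h
  refine ⟨(mem_rot1 hn).2 h1, fun hh => h2 ((mem_rot1 hn).1 hh), ?_⟩
  intro f hf hne
  obtain ⟨f', hf', rfl⟩ := Finset.mem_image.1 hf
  exact (mem_rot1 hn).2 (h3 f' hf' (fun hh => hne (by rw [hh])))

lemma sc_rot (hn : 5 ≤ n) {v : Fin n} {T T' : Triangulation n} (h : SC v T T') :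
    SC (rF v) (rot1 hn T) (rot1 hn T') := by
  obtain ⟨e, z, hflip, hnew, hve⟩ := h
  refine ⟨rS e, rF z, isFlip_rot hn hflip, ?_, fun hh => hve (mem_rS.1 hh)⟩
  have : rS s(v, z) = s(rF v, rF z) := Sym2.map_pair_eq _ _ _
  rw [← this]
  exact ⟨(mem_rot1 hn).2 hnew.1, fun hh => hnew.2 ((mem_rot1 hn).1 hh)⟩

lemma sc_rotk (hn : 5 ≤ n) (k : ℕ) {v : Fin n} {T T' : Triangulation n} (h : SC v T T') :
    SC (rF^[k] v) ((rot1 hn)^[k] T) ((rot1 hn)^[k] T') := by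
  induction k with
  | zero => exact h
  | succ k ih =>
    rw [Function.iterate_succ_apply', Function.iterate_succ_apply',
      Function.iterate_succ_apply']
    exact sc_rot hn ih

theorem stepV (hn : 5 ≤ n) (T : Triangulation n) (v : Fin n)
    (hmiss : ∃ s, IsDiag n s ∧ v ∈ s ∧ s ∉ T.diags) :
    ∃ T', SC v T T' := by
  obtain ⟨s, hsD, hsv, hsN⟩ := hmiss
  set k := n - v.1 with hk
  have hvn := v.isLt
  -- rotate so that v ↦ 0
  have hv0 : rF^[k] v = (⟨0, by omega⟩ : Fin n) := by
    apply Fin.ext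
    rw [rF_iter]
    simp only [Fin.val_mk]
    rw [show v.1 + k = n by omega, Nat.mod_self]
  have hs'v : (⟨0, by omega⟩ : Fin n) ∈ (rS (n := n))^[k] s := by
    rw [← hv0, rS_iter]
    exact Sym2.mem_map.2 ⟨v, hsv, rfl⟩
  obtain ⟨w, hw⟩ := Sym2.mem_iff_exists.1 hs'v
  have hwD : IsDiag n s((⟨0, by omega⟩ : Fin n), w) := by
    rw [← hw]
    exact isDiag_rotk hn k hsD
  have hwN : s((⟨0, by omega⟩ : Fin n), w) ∉ ((rot1 hn)^[k] T).diags := by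
    rw [← hw, rot1_iter_diags]
    intro hmem
    obtain ⟨s2, hs2, hs2e⟩ := Finset.mem_image.1 hmem
    have : s2 = s := by
      have hinj : Function.Injective ((rS (n := n))^[k]) := by
        apply Function.Injective.iterate
        exact rS_inj (by omega)
      exact hinj hs2e
    rw [this] at hs2
    exact hsN hs2
  obtain ⟨T'', hT''⟩ := step0 hn ((rot1 hn)^[k] T) w hwD hwN
  have h2 := sc_rotk hn v.1 hT''
  rw [← Function.iterate_add_apply, show v.1 + k = n by omega, rot1_iter_n] at h2
  have hvv : rF^[v.1] (⟨0, by omega⟩ : Fin n) = v := by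
    apply Fin.ext
    rw [rF_iter]
    simp only [Fin.val_mk]
    rw [Nat.zero_add, Nat.mod_eq_of_lt hvn]
  rw [hvv] at h2
  exact ⟨_, h2⟩

noncomputable def degV (v : Fin n) (T : Triangulation n) : ℕ :=
  (T.diags.filter (fun s => v ∈ s)).card

lemma sc_diags (hn : 5 ≤ n) {v : Fin n} {T T' : Triangulation n} (h : SC v T T') :
    ∃ e z, v ∉ e ∧ e ∈ T.diags ∧ s(v,z) ∉ T.diags ∧
      T'.diags = insert s(v,z) (T.diags.erase e) := by
  obtain ⟨e, z, hflip, hnew, hve⟩ := h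
  obtain ⟨T₂, dst, -, hFC, -⟩ := flip_spec hn T e hflip.1
  have hdst : s(v,z) = dst := newDiag_eq hflip hFC hnew
  refine ⟨e, z, hve, hflip.1, hnew.2, ?_⟩
  rw [hdst]
  exact isFlip_diags hflip hFC

lemma sc_degV (hn : 5 ≤ n) {v : Fin n} {T T' : Triangulation n} (h : SC v T T') :
    degV v T' = degV v T + 1 := by
  classical
  obtain ⟨e, z, hve, heT, hzN, hdiags⟩ := sc_diags hn h
  unfold degV
  rw [hdiags, Finset.filter_insert, if_pos (Sym2.mem_mk_left _ _), Finset.filter_erase]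
  rw [Finset.erase_eq_of_notMem (by
    intro hmem
    exact hve (Finset.mem_filter.1 hmem).2)]
  rw [Finset.card_insert_of_notMem (by
    intro hmem
    exact hzN (Finset.mem_filter.1 hmem).1)]

lemma degV_lt_fan (hn : 5 ≤ n) {v : Fin n} {T : Triangulation n} (h : T ≠ fanV hn v) :
    degV v T < degV v (fanV hn v) ∧ ∃ s, IsDiag n s ∧ v ∈ s ∧ s ∉ T.diags := by
  classical
  have hmiss : ∃ s, IsDiag n s ∧ v ∈ s ∧ s ∉ T.diags := by
    by_contra hc
    push_neg at hc
    exact h (eq_fanV_of_full hn v (fun s h1 h2 => hc s h1 h2))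
  obtain ⟨s, hsD, hsv, hsN⟩ := hmiss
  refine ⟨?_, s, hsD, hsv, hsN⟩
  apply Finset.card_lt_card
  rw [Finset.ssubset_iff_of_subset]
  · exact ⟨s, Finset.mem_filter.2 ⟨fanV_full hn v s hsD hsv, hsv⟩,
      fun hmem => hsN (Finset.mem_filter.1 hmem).1⟩
  · intro a ha
    obtain ⟨haT, hav⟩ := Finset.mem_filter.1 ha
    exact Finset.mem_filter.2 ⟨fanV_full hn v a (T.isDiag a haT) hav, hav⟩

lemma degV_fanV_le (hn : 5 ≤ n) (v : Fin n) : degV v (fanV hn v) ≤ n - 3 := by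
  classical
  have h1 : degV v (fanV hn v) ≤ (fanV hn v).diags.card := Finset.card_filter_le _ _
  have h2 : (fanV hn v).diags.card ≤ (fan0 hn).diags.card := by
    rw [fanV, rot1_iter_diags]
    exact Finset.card_image_le
  have h3 : (fan0 hn).diags.card ≤ n - 3 := by
    have h4 : (fan0 hn).diags.card ≤
        ((Finset.univ : Finset (Fin n)).filter (fun j => 2 ≤ j.1 ∧ j.1 ≤ n-2)).card :=
      Finset.card_image_le
    have h5 : ((Finset.univ : Finset (Fin n)).filter (fun j => 2 ≤ j.1 ∧ j.1 ≤ n-2)).card ≤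
        (Finset.Icc 2 (n-2)).card := by
      apply Finset.card_le_card_of_injOn (fun j => j.1)
      · intro j hj
        obtain ⟨-, h6, h7⟩ := Finset.mem_filter.1 hj
        exact Finset.mem_Icc.2 ⟨h6, h7⟩
      · intro j _ i _ hji
        exact Fin.ext hji
    rw [Nat.card_Icc] at h5
    omega
  omega

lemma climb_tri (hn : 5 ≤ n) (v : Fin n) :
    ∀ (k : ℕ) (T : Triangulation n), degV v (fanV hn v) ≤ degV v T + k →
      (TriGraph n).Reachable T (fanV hn v) := by
  intro k
  induction k with
  | zero =>
    intro T hdeg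
    by_cases hT : T = fanV hn v
    · rw [hT]
    · exact absurd hdeg (by have := (degV_lt_fan hn hT).1; omega)
  | succ k ih =>
    intro T hdeg
    by_cases hT : T = fanV hn v
    · rw [hT]
    · obtain ⟨-, hmiss⟩ := degV_lt_fan hn hT
      obtain ⟨T', hsc⟩ := stepV hn T v hmiss
      have hne : T ≠ T' := by
        obtain ⟨e, z, hflip, -, -⟩ := hsc
        intro hh
        rw [hh] at hflip
        exact hflip.2.1 hflip.1
      have hadj : (TriGraph n).Adj T T' := ⟨hne, Or.inl ⟨_, hsc.choose_spec.choose_spec.1⟩⟩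
      have hdeg' := sc_degV hn hsc
      exact (hadj.reachable).trans (ih T' (by omega))

lemma tri_preconnected (hn : 5 ≤ n) : (TriGraph n).Preconnected := by
  intro T T'
  have v0 : Fin n := ⟨0, by omega⟩
  have h1 := climb_tri hn v0 (degV v0 (fanV hn v0)) T (by omega)
  have h2 := climb_tri hn v0 (degV v0 (fanV hn v0)) T' (by omega)
  exact h1.trans h2.symm

noncomputable def wt : Sym2 (Fin n) → ℕ :=
  Sym2.lift ⟨fun x y => max x.1 y.1 - min x.1 y.1, by
    intro x y
    simp [Nat.max_comm, Nat.min_comm]⟩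

lemma wt_mk (x y : Fin n) : wt s(x,y) = max x.1 y.1 - min x.1 y.1 := rfl

lemma ear (hn : 5 ≤ n) (S : Triangulation n) :
    ∃ v : Fin n, (∀ e ∈ S.diags, v ∉ e) ∧
      (∀ X : Triangulation n, Disjoint S.diags X.diags → 1 ≤ degV v X) := by
  classical
  have hSne : S.diags.Nonempty := by
    by_contra hc
    rw [Finset.not_nonempty_iff_eq_empty] at hc
    have : s((⟨0, by omega⟩ : Fin n), (⟨2, by omega⟩ : Fin n)) ∈ S.diags := by
      apply S.maximal
      · rw [isDiag_iff]
        simp only [Fin.val_mk]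
        rw [Nat.mod_eq_of_lt (by omega), Nat.mod_eq_of_lt (by omega)]
        omega
      · intro e he
        rw [hc] at he
        exact absurd he (Finset.notMem_empty e)
    rw [hc] at this
    exact absurd this (Finset.notMem_empty _)
  obtain ⟨d₀, hd₀, hmin⟩ := Finset.exists_min_image S.diags wt hSne
  obtain ⟨a, b, hrep, hab⟩ := isDiag_sorted_reps (S.isDiag d₀ hd₀)
  subst hrep
  have hbl := b.isLt
  have hab2 := (sorted_of_isDiag hn hab (S.isDiag _ hd₀)).1
  set v : Fin n := ⟨a.1 + 1, by omega⟩ with hvdef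
  have hv : v.1 = a.1 + 1 := rfl
  have part1 : ∀ e ∈ S.diags, v ∉ e := by
    intro e he hv'
    obtain ⟨z, rfl⟩ := Sym2.mem_iff_exists.1 hv'
    obtain ⟨h1, h2, h3⟩ := isDiag_iff.1 (S.isDiag _ he)
    have hzl := z.isLt
    rcases Nat.lt_trichotomy z.1 a.1 with hz | hz | hz
    · exact S.noncross _ he _ hd₀ (crosses_iff.2 (by rw [hv]; unfold XP; omega))
    · rw [hz, Nat.mod_eq_of_lt (by omega)] at h3
      omega
    · rcases Nat.lt_or_ge b.1 z.1 with hz2 | hz2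
      · exact S.noncross _ he _ hd₀ (crosses_iff.2 (by rw [hv]; unfold XP; omega))
      · -- a < z ≤ b : contradicts minimality
        have hwe := hmin _ he
        rw [wt_mk, wt_mk, hv] at hwe
        omega
  have hc2 : a.1 + 2 < n := by omega
  set c2 : Fin n := ⟨a.1 + 2, hc2⟩ with hc2def
  have hc2v : c2.1 = a.1 + 2 := rfl
  have hc2D : IsDiag n s(a, c2) := by
    rw [isDiag_iff, hc2v]
    rw [Nat.mod_eq_of_lt (by omega), succ_mod hc2]
    split <;> omega
  have hkey : ∀ (Y : Triangulation n), (∀ e ∈ Y.diags, v ∉ e → True) →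
      (∀ u w : Fin n, u.1 < w.1 → s(u,w) ∈ Y.diags → v ∉ s(u,w) → ¬ XP a.1 c2.1 u.1 w.1) := by
    intro Y _ u w huw hmem hvm hXP
    rw [hc2v] at hXP
    apply hvm
    rw [Sym2.mem_iff]
    have : u.1 = v.1 ∨ w.1 = v.1 := by rw [hv]; unfold XP at hXP; omega
    rcases this with h | h
    · exact Or.inl (Fin.ext h.symm)
    · exact Or.inr (Fin.ext h.symm)
  have hc2S : s(a, c2) ∈ S.diags := by
    apply S.maximal _ hc2D
    apply noncross_all'
    intro u w huw hmem hne
    exact hkey S (fun _ _ _ => trivial) u w huw hmem (part1 _ hmem)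
  refine ⟨v, part1, ?_⟩
  intro X hdisj
  by_contra hdeg
  push_neg at hdeg
  have hdeg0 : degV v X = 0 := by omega
  have hv0X : ∀ e ∈ X.diags, v ∉ e := by
    intro e he hv'
    have : e ∈ X.diags.filter (fun s => v ∈ s) := Finset.mem_filter.2 ⟨he, hv'⟩
    rw [Finset.card_eq_zero.1 hdeg0] at this
    exact absurd this (Finset.notMem_empty e)
  have hc2X : s(a, c2) ∈ X.diags := by
    apply X.maximal _ hc2D
    apply noncross_all'
    intro u w huw hmem hne
    exact hkey X (fun _ _ _ => trivial) u w huw hmem (hv0X _ hmem)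
  exact Finset.disjoint_left.1 hdisj hc2S hc2X


lemma fan_disjoint_of_earless (hn : 5 ≤ n) {S : Triangulation n} {v : Fin n}
    (hv : ∀ e ∈ S.diags, v ∉ e) : Disjoint S.diags (fanV hn v).diags := by
  rw [Finset.disjoint_left]
  intro a haS haF
  exact hv _ haS (fanV_mem_v hn v _ haF)

lemma climb_D (hn : 5 ≤ n) (S : Triangulation n) (v : Fin n)
    (hv : ∀ e ∈ S.diags, v ∉ e) :
    ∀ (k : ℕ) (X : Triangulation n) (hX : Disjoint S.diags X.diags),
      degV v (fanV hn v) ≤ degV v X + k →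
      ∃ w : (DGraph n).Walk ⟨(S, X), hX⟩ ⟨(S, fanV hn v), fan_disjoint_of_earless hn hv⟩,
        w.length ≤ k := by
  intro k
  induction k with
  | zero =>
    intro X hX hdeg
    by_cases hT : X = fanV hn v
    · subst hT
      exact ⟨SimpleGraph.Walk.nil, Nat.zero_le _⟩
    · exact absurd hdeg (by have := (degV_lt_fan hn hT).1; omega)
  | succ k ih =>
    intro X hX hdeg
    by_cases hT : X = fanV hn v
    · subst hT
      exact ⟨SimpleGraph.Walk.nil, Nat.zero_le _⟩
    · obtain ⟨-, hmiss⟩ := degV_lt_fan hn hT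
      obtain ⟨X', hsc⟩ := stepV hn X v hmiss
      obtain ⟨e, z, hflip, hnew, hve⟩ := hsc
      have hX' : Disjoint S.diags X'.diags := by
        obtain ⟨e', z', hve', heT, hzN, hdiags⟩ := sc_diags hn ⟨e, z, hflip, hnew, hve⟩
        rw [Finset.disjoint_left]
        intro a haS haX'
        rw [hdiags] at haX'
        rcases Finset.mem_insert.1 haX' with rfl | hmem
        · exact hv _ haS (Sym2.mem_mk_left _ _)
        · exact Finset.disjoint_left.1 hX haS (Finset.mem_of_mem_erase hmem)
      have hadj : (DGraph n).Adj ⟨(S, X), hX⟩ ⟨(S, X'), hX'⟩ := by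
        constructor
        · intro hh
          have hXX : X = X' := congrArg (fun t : DVert n => t.1.2) hh
          exact hflip.2.1 (hXX ▸ hflip.1)
        · refine Or.inl (Or.inr ⟨e, X', s(v, z), hflip, hnew, Or.inl ⟨?_, rfl⟩⟩)
          exact fun hh => hv _ hh (Sym2.mem_mk_left _ _)
      obtain ⟨w', hw'⟩ := ih X' hX'
        (by have := sc_degV hn ⟨e, z, hflip, hnew, hve⟩; omega)
      exact ⟨SimpleGraph.Walk.cons hadj w', by have := SimpleGraph.Walk.length_cons hadj w'; omega⟩

lemma lift_walk (hn : 5 ≤ n) :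
    ∀ (T1 S1 : Triangulation n) (w : (TriGraph n).Walk T1 S1)
      (T2 : Triangulation n) (h : Disjoint T1.diags T2.diags),
      ∃ (X : Triangulation n) (hX : Disjoint S1.diags X.diags)
        (w' : (DGraph n).Walk ⟨(T1, T2), h⟩ ⟨(S1, X), hX⟩), w'.length ≤ w.length := by
  intro T1 S1 w
  induction w with
  | nil => exact fun T2 h => ⟨T2, h, SimpleGraph.Walk.nil, le_refl _⟩
  | @cons A B C hadj rest ih =>
    intro T2 h
    have hflipfwd : FlipAdj A B := by
      rcases hadj.2 with h1 | h1
      · exact h1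
      · exact flipAdj_symm' hn h1
    obtain ⟨d, hflip⟩ := hflipfwd
    obtain ⟨T₀, dst, -, hFC, -⟩ := flip_spec hn A d hflip.1
    have hUdiags := isFlip_diags hflip hFC
    by_cases hdst2 : dst ∈ T2.diags
    · obtain ⟨T2', dst2, hflip2, hFC2, hdiags2⟩ := flip_spec hn T2 dst hdst2
      have hdisj' : Disjoint B.diags T2'.diags := by
        rw [Finset.disjoint_left]
        intro a haU haT2'
        rw [hUdiags] at haU
        rw [hdiags2] at haT2'
        rcases Finset.mem_insert.1 haT2' with rfl | haT2'
        · rcases Finset.mem_insert.1 haU with h1 | h1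
          · exact crosses_irrefl (h1 ▸ hFC2.2.1)
          · have hdst2U : a ∈ B.diags := by
              rw [hUdiags]; exact Finset.mem_insert_of_mem h1
            have hdstU : dst ∈ B.diags := by
              rw [hUdiags]; exact Finset.mem_insert_self _ _
            exact B.noncross _ hdstU _ hdst2U hFC2.2.1
        · have haT2 := Finset.mem_of_mem_erase haT2'
          rcases Finset.mem_insert.1 haU with rfl | h1
          · exact (Finset.mem_erase.1 haT2').1 rfl
          · exact Finset.disjoint_left.1 h (Finset.mem_of_mem_erase h1) haT2
      have hadjD : (DGraph n).Adj ⟨(A, T2), h⟩ ⟨(B, T2'), hdisj'⟩ := by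
        refine ⟨?_, Or.inl (Or.inl ⟨d, B, dst, hflip, newDiag_dst hflip hFC,
          Or.inr ⟨hdst2, T2', hflip2, rfl⟩⟩)⟩
        intro hh
        exact hadj.1 (congrArg (fun t : DVert n => t.1.1) hh)
      obtain ⟨X, hX, w', hw'⟩ := ih T2' hdisj'
      refine ⟨X, hX, SimpleGraph.Walk.cons hadjD w', ?_⟩
      have := SimpleGraph.Walk.length_cons hadjD w'
      have := SimpleGraph.Walk.length_cons hadj rest
      omega
    · have hdisj' : Disjoint B.diags T2.diags := by
        rw [Finset.disjoint_left]
        intro a haU haT2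
        rw [hUdiags] at haU
        rcases Finset.mem_insert.1 haU with rfl | h1
        · exact hdst2 haT2
        · exact Finset.disjoint_left.1 h (Finset.mem_of_mem_erase h1) haT2
      have hadjD : (DGraph n).Adj ⟨(A, T2), h⟩ ⟨(B, T2), hdisj'⟩ := by
        refine ⟨?_, Or.inl (Or.inl ⟨d, B, dst, hflip, newDiag_dst hflip hFC,
          Or.inl ⟨hdst2, rfl⟩⟩)⟩
        intro hh
        exact hadj.1 (congrArg (fun t : DVert n => t.1.1) hh)
      obtain ⟨X, hX, w', hw'⟩ := ih T2 hdisj'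
      refine ⟨X, hX, SimpleGraph.Walk.cons hadjD w', ?_⟩
      have := SimpleGraph.Walk.length_cons hadjD w'
      have := SimpleGraph.Walk.length_cons hadj rest
      omega

lemma main_walk (hn : 5 ≤ n) (hTop : (TriGraph n).ediam ≠ ⊤) (p q : DVert n) :
    ∃ w : (DGraph n).Walk p q, w.length ≤ (TriGraph n).diam + (2 * n - 8) := by
  obtain ⟨⟨T1, T2⟩, hp⟩ := p
  obtain ⟨⟨S1, S2⟩, hq⟩ := q
  obtain ⟨w0, hw0⟩ := (tri_preconnected hn T1 S1).exists_walk_length_eq_dist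
  have hw0len : w0.length ≤ (TriGraph n).diam := by
    rw [hw0]
    exact SimpleGraph.dist_le_diam hTop
  obtain ⟨X, hX, w1, hw1⟩ := lift_walk hn T1 S1 w0 T2 hp
  obtain ⟨v, hv, hdegpos⟩ := ear hn S1
  have hM := degV_fanV_le hn v
  have h1X := hdegpos X hX
  have h1S2 := hdegpos S2 hq
  obtain ⟨w2, hw2⟩ := climb_D hn S1 v hv (n - 4) X hX (by omega)
  obtain ⟨w3, hw3⟩ := climb_D hn S1 v hv (n - 4) S2 hq (by omega)
  refine ⟨w1.append (w2.append w3.reverse), ?_⟩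
  have := SimpleGraph.Walk.length_append w1 (w2.append w3.reverse)
  have := SimpleGraph.Walk.length_append w2 w3.reverse
  have := SimpleGraph.Walk.length_reverse w3
  omega

lemma dvert_nonempty (hn : 5 ≤ n) : Nonempty (DVert n) := by
  refine ⟨⟨(fan0 hn, fanV hn ⟨1, by omega⟩), ?_⟩⟩
  rw [Finset.disjoint_left]
  intro e he hf
  have h0 : (⟨0, by omega⟩ : Fin n) ∈ e := fan0_mem_z0 hn e he
  have h1 : (⟨1, by omega⟩ : Fin n) ∈ e := fanV_mem_v hn _ e hf
  obtain ⟨w, rfl⟩ := Sym2.mem_iff_exists.1 h0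
  rcases Sym2.mem_iff.1 h1 with h2 | h2
  · exact absurd (congrArg Fin.val h2) (by simp)
  · obtain ⟨hne, hadj, -⟩ := isDiag_iff.1 ((fan0 hn).isDiag _ he)
    rw [← h2] at hadj
    simp only [Fin.val_mk] at hadj
    rw [Nat.mod_eq_of_lt (by omega)] at hadj
    exact hadj rfl

lemma tri_ediam_ne_top (hn : 5 ≤ n) : (TriGraph n).ediam ≠ ⊤ := by
  haveI : Finite (Triangulation n) :=
    Finite.of_injective Triangulation.diags (fun a b h => tri_ext h)
  haveI : Nonempty (Triangulation n) := ⟨fan0 hn⟩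
  obtain ⟨u, w, huw⟩ := SimpleGraph.exists_edist_eq_ediam_of_finite (G := TriGraph n)
  rw [← huw]
  exact SimpleGraph.edist_ne_top_iff_reachable.2 (tri_preconnected hn u w)

end Pf

/-- For `n ≥ 5`, the flip graph `D_n` on ordered pairs of
disjoint triangulations of the convex `n`-gon is connected, its diameter is at
most `diam(T_n) + (2n - 8)`, and in particular if `diam(T_n) ≤ 2n - 8` then
`diam(D_n) ≤ 4n - 16`. -/
theorem DGraph_connected_diam (n : ℕ) (hn : 5 ≤ n) :
    (DGraph n).Connected ∧
      (DGraph n).diam ≤ (TriGraph n).diam + (2 * n - 8) ∧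
      ((TriGraph n).diam ≤ 2 * n - 8 → (DGraph n).diam ≤ 4 * n - 16) := by
  have hTop := Pf.tri_ediam_ne_top (n := n) hn
  have hwalk := Pf.main_walk hn hTop
  have hdiam : (DGraph n).diam ≤ (TriGraph n).diam + (2 * n - 8) := by
    have hediam : (DGraph n).ediam ≤ (((TriGraph n).diam + (2 * n - 8) : ℕ) : ℕ∞) := by
      apply SimpleGraph.ediam_le_of_edist_le
      intro u v
      obtain ⟨w, hw⟩ := hwalk u v
      exact le_trans (SimpleGraph.Walk.edist_le w) (by exact_mod_cast hw)
    calc (DGraph n).diam = (DGraph n).ediam.toNat := rfl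
      _ ≤ (((TriGraph n).diam + (2 * n - 8) : ℕ) : ℕ∞).toNat :=
          ENat.toNat_le_toNat hediam (ENat.coe_ne_top _)
      _ = (TriGraph n).diam + (2 * n - 8) := ENat.toNat_coe _
  refine ⟨?_, hdiam, ?_⟩
  · rw [SimpleGraph.connected_iff]
    refine ⟨?_, Pf.dvert_nonempty hn⟩
    intro u v
    exact ⟨(hwalk u v).choose⟩
  · intro h
    omega
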